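/- For i.i.d. continuous observations and integers 1 ≤ t < k, the conditional expectation of the difference between the relative rank of the last of k observations and the absolute rank of the t-th observation satisfies E[R_k − A_{t,k} | R_1 = r_1,…,R_{t−1} = r_{t−1}, R_t = r] = (k+1)/2 − (k+1) r/(t+1), for all admissible values r_1,…,r_{t−1} and 1 ≤ r ≤ t. -/

import Mathlib

open MeasureTheory ProbabilityTheory Finset
open scoped ENNReal Classical

noncomputable section

/-- The σ-algebra on `Ω` generated by the functions `f 1, …, f t`. -/
def genFilt {Ω β : Type*} [MeasurableSpace β] (f : ℕ → Ω → β) (t : ℕ) :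
    MeasurableSpace Ω :=
  ⨆ i ∈ Set.Icc 1 t, MeasurableSpace.comap (f i) inferInstance

/-- `τ` is a stopping time with values in `{1,…,n}` of the filtration generated by `f`. -/
def IsStopTime {Ω β : Type*} [MeasurableSpace β] (f : ℕ → Ω → β) (n : ℕ) (τ : Ω → ℕ) : Prop :=
  (∀ ω, τ ω ∈ Set.Icc 1 n) ∧ ∀ t, MeasurableSet[genFilt f t] {ω | τ ω = t}

/-- The family `(f i)_{i ∈ s}` is independent under `μ`. -/
def IndepSeq {Ω β : Type*} [MeasurableSpace Ω] [MeasurableSpace β]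
    (f : ℕ → Ω → β) (s : Set ℕ) (μ : Measure Ω) : Prop :=
  iIndepFun (m := fun _ : s => (inferInstance : MeasurableSpace β)) (fun i : s => f i.1) μ

/-- `N` is independent of the family `(f i)_{i ∈ s}`. -/
def IndepOfSeq {Ω β : Type*} [MeasurableSpace Ω] [MeasurableSpace β]
    (N : Ω → ℕ) (f : ℕ → Ω → β) (s : Set ℕ) (μ : Measure Ω) : Prop :=
  IndepFun N (fun ω (i : s) => f i.1 ω) μ

/-- The absolute rank `A_{t,k}` of `X t` among `X 1, …, X k`
(the largest observation has rank 1). -/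
def absRank {Ω : Type*} (X : ℕ → Ω → ℝ) (t k : ℕ) (ω : Ω) : ℕ :=
  ((Finset.Icc 1 k).filter fun j => X t ω ≤ X j ω).card

/-- The relative rank `R_t = A_{t,t}`. -/
def relRank {Ω : Type*} (X : ℕ → Ω → ℝ) (t : ℕ) (ω : Ω) : ℕ := absRank X t t ω

/-- `(X i)_{i ∈ s}` are i.i.d. with an atomless (continuous) common distribution. -/
def IIDContinuousOn {Ω : Type*} [MeasurableSpace Ω] (X : ℕ → Ω → ℝ) (s : Set ℕ)
    (μ : Measure Ω) : Prop :=
  (∀ i ∈ s, Measurable (X i)) ∧ IndepSeq X s μ ∧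
  (∀ i ∈ s, ∀ j ∈ s, IdentDistrib (X i) (X j) μ μ) ∧
  (∀ i ∈ s, ∀ x : ℝ, μ {ω | X i ω = x} = 0)

section Aux
namespace S16

/-- number of indices `j < m` with `π j ≥ π i` -/
def Cn {n : ℕ} (m i : ℕ) (π : Equiv.Perm (Fin n)) : ℕ :=
  (Finset.univ.filter fun j : Fin n => (j : ℕ) < m ∧ ∀ hi : i < n, π ⟨i, hi⟩ ≤ π j).card

/-- insertion of a new top index with value `v` -/
def ins {n : ℕ} (π : Equiv.Perm (Fin n)) (v : Fin (n + 1)) : Equiv.Perm (Fin (n + 1)) :=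
  Equiv.ofBijective (fun i => Fin.lastCases v (fun j => v.succAbove (π j)) i) (by
    rw [Fintype.bijective_iff_injective_and_card]
    refine ⟨fun a b hab => ?_, rfl⟩
    induction a using Fin.lastCases with
    | last =>
      induction b using Fin.lastCases with
      | last => rfl
      | cast b =>
        simp only [Fin.lastCases_last, Fin.lastCases_castSucc] at hab
        exact absurd hab.symm (Fin.succAbove_ne v (π b))
    | cast a =>
      induction b using Fin.lastCases with
      | last =>
        simp only [Fin.lastCases_last, Fin.lastCases_castSucc] at hab
        exact absurd hab (Fin.succAbove_ne v (π a))
      | cast b =>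
        simp only [Fin.lastCases_castSucc] at hab
        exact congrArg Fin.castSucc (π.injective ((Fin.succAbove_right_injective (p := v)) hab)))

@[simp] lemma ins_last {n : ℕ} (π : Equiv.Perm (Fin n)) (v : Fin (n + 1)) :
    ins π v (Fin.last n) = v := by
  simp [ins]

@[simp] lemma ins_castSucc {n : ℕ} (π : Equiv.Perm (Fin n)) (v : Fin (n + 1)) (j : Fin n) :
    ins π v (Fin.castSucc j) = v.succAbove (π j) := by
  simp [ins]

lemma ins_bijective {n : ℕ} :
    Function.Bijective (fun p : Equiv.Perm (Fin n) × Fin (n + 1) => ins p.1 p.2) := by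
  rw [Fintype.bijective_iff_injective_and_card]
  constructor
  · rintro ⟨π, v⟩ ⟨π', v'⟩ h
    simp only at h
    have hv : v = v' := by
      have := congrArg (fun e : Equiv.Perm (Fin (n+1)) => e (Fin.last n)) h
      simpa using this
    subst hv
    have hπ : π = π' := by
      ext j
      have := congrArg (fun e : Equiv.Perm (Fin (n+1)) => e (Fin.castSucc j)) h
      simp only [ins_castSucc] at this
      exact congrArg Fin.val (Fin.succAbove_right_injective (p := v) this)
    rw [hπ]
  · simp [Fintype.card_perm, Nat.factorial_succ, mul_comm]

lemma Cn_full {n : ℕ} (i : ℕ) (hi : i < n) (π : Equiv.Perm (Fin n)) :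
    Cn n i π = n - π ⟨i, hi⟩ := by
  unfold Cn
  have h1 : (Finset.univ.filter fun j : Fin n => (j : ℕ) < n ∧
      ∀ hi : i < n, π ⟨i, hi⟩ ≤ π j).card
      = (Finset.univ.filter fun j : Fin n => π ⟨i, hi⟩ ≤ π j).card := by
    apply Finset.card_bij (fun j _ => j) <;> simp_all
  rw [h1]
  have h2 : (Finset.univ.filter fun j : Fin n => π ⟨i, hi⟩ ≤ π j).card
      = (Finset.univ.filter fun b : Fin n => π ⟨i, hi⟩ ≤ b).card := by
    apply Finset.card_bij (fun j _ => π j)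
    · intro a ha; simp_all
    · intro a ha b hb hab; exact π.injective hab
    · intro b hb; exact ⟨π.symm b, by simp_all⟩
  rw [h2]
  have : (Finset.univ.filter fun b : Fin n => π ⟨i, hi⟩ ≤ b) = Finset.Ici (π ⟨i, hi⟩) := by
    ext b; simp
  rw [this, Fin.card_Ici]

lemma Cn_ins_of_le {n : ℕ} (m i : ℕ) (hm : m ≤ n) (hi : i < n)
    (π : Equiv.Perm (Fin n)) (v : Fin (n + 1)) :
    Cn m i (ins π v) = Cn m i π := by
  unfold Cn
  rw [Finset.card_filter, Finset.card_filter, Fin.sum_univ_castSucc]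
  have hlast : (if ((Fin.last n : Fin (n+1)) : ℕ) < m ∧
      ∀ hi' : i < n + 1, (ins π v) ⟨i, hi'⟩ ≤ (ins π v) (Fin.last n) then 1 else 0) = 0 := by
    have : ¬ ((Fin.last n : Fin (n+1)) : ℕ) < m := by simp [Fin.last]; omega
    simp only [this, false_and, if_false]
  rw [hlast, add_zero]
  apply Finset.sum_congr rfl
  intro j _
  congr 1
  rw [eq_iff_iff]
  have hmk : (⟨i, Nat.lt_succ_of_lt hi⟩ : Fin (n+1)) = Fin.castSucc ⟨i, hi⟩ := rfl
  constructor
  · rintro ⟨h1, h2⟩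
    refine ⟨by simpa using h1, fun hi' => ?_⟩
    have := h2 (Nat.lt_succ_of_lt hi)
    rw [hmk, ins_castSucc, ins_castSucc, Fin.succAbove_le_succAbove_iff] at this
    exact this
  · rintro ⟨h1, h2⟩
    refine ⟨by simpa using h1, fun hi' => ?_⟩
    have := h2 hi
    have hmk' : (⟨i, hi'⟩ : Fin (n+1)) = Fin.castSucc ⟨i, hi⟩ := rfl
    rw [hmk', ins_castSucc, ins_castSucc, Fin.succAbove_le_succAbove_iff]
    exact this

lemma Cn_ins_last {n : ℕ} (π : Equiv.Perm (Fin n)) (v : Fin (n + 1)) :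
    Cn (n + 1) n (ins π v) = n + 1 - v := by
  unfold Cn
  have h1 : (Finset.univ.filter fun j : Fin (n+1) => ((j : ℕ) < n + 1 ∧
      ∀ hi : n < n + 1, (ins π v) ⟨n, hi⟩ ≤ (ins π v) j)).card
      = (Finset.univ.filter fun j : Fin (n+1) => v ≤ (ins π v) j).card := by
    apply Finset.card_bij (fun j _ => j)
    · intro a ha
      simp only [Finset.mem_filter, Finset.mem_univ, true_and] at ha ⊢
      have := ha.2 (Nat.lt_succ_self n)
      have hlast : (⟨n, Nat.lt_succ_self n⟩ : Fin (n+1)) = Fin.last n := rfl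
      rwa [hlast, ins_last] at this
    · intro a b _ _ h; exact h
    · intro b hb
      refine ⟨b, ?_, rfl⟩
      simp only [Finset.mem_filter, Finset.mem_univ, true_and] at hb ⊢
      exact ⟨b.isLt, fun hi => by
        have hlast : (⟨n, hi⟩ : Fin (n+1)) = Fin.last n := rfl
        rwa [hlast, ins_last]⟩
  rw [h1]
  have h2 : (Finset.univ.filter fun j : Fin (n+1) => v ≤ (ins π v) j).card
      = (Finset.univ.filter fun b : Fin (n+1) => v ≤ b).card := by
    apply Finset.card_bij (fun j _ => (ins π v) j)
    · intro a ha; simp_all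
    · intro a _ b _ hab; exact (ins π v).injective hab
    · intro b hb; exact ⟨(ins π v).symm b, by simp_all⟩
  rw [h2]
  have : (Finset.univ.filter fun b : Fin (n+1) => v ≤ b) = Finset.Ici v := by
    ext b; simp
  rw [this, Fin.card_Ici]

lemma Cn_ins_castSucc {n : ℕ} (i : ℕ) (hi : i < n)
    (π : Equiv.Perm (Fin n)) (v : Fin (n + 1)) :
    Cn (n + 1) i (ins π v) = Cn n i π +
      (if Fin.castSucc (π ⟨i, hi⟩) < v then 1 else 0) := by
  unfold Cn
  rw [Finset.card_filter, Finset.card_filter, Fin.sum_univ_castSucc]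
  congr 1
  · apply Finset.sum_congr rfl
    intro j _
    congr 1
    rw [eq_iff_iff]
    have hmk : ∀ hi' : i < n + 1, (⟨i, hi'⟩ : Fin (n+1)) = Fin.castSucc ⟨i, hi⟩ := fun _ => rfl
    constructor
    · rintro ⟨_, h2⟩
      refine ⟨j.isLt, fun hi' => ?_⟩
      have := h2 (Nat.lt_succ_of_lt hi)
      rw [hmk _, ins_castSucc, ins_castSucc, Fin.succAbove_le_succAbove_iff] at this
      exact this
    · rintro ⟨_, h2⟩
      refine ⟨by simpa using j.isLt.trans (Nat.lt_succ_self n), fun hi' => ?_⟩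
      rw [hmk _, ins_castSucc, ins_castSucc, Fin.succAbove_le_succAbove_iff]
      exact h2 hi
  · -- last term
    have hmk : ∀ hi' : i < n + 1, (⟨i, hi'⟩ : Fin (n+1)) = Fin.castSucc ⟨i, hi⟩ := fun _ => rfl
    have hcond : (((Fin.last n : Fin (n+1)) : ℕ) < n + 1 ∧
        ∀ hi' : i < n + 1, (ins π v) ⟨i, hi'⟩ ≤ (ins π v) (Fin.last n))
        ↔ Fin.castSucc (π ⟨i, hi⟩) < v := by
      constructor
      · rintro ⟨_, h2⟩
        have := h2 (Nat.lt_succ_of_lt hi)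
        rw [hmk _, ins_castSucc, ins_last] at this
        have hne := Fin.succAbove_ne v (π ⟨i, hi⟩)
        have hlt : v.succAbove (π ⟨i, hi⟩) < v := lt_of_le_of_ne this hne
        rwa [Fin.succAbove_lt_iff_castSucc_lt] at hlt
      · intro h
        refine ⟨by simp, fun hi' => ?_⟩
        rw [hmk _, ins_castSucc, ins_last]
        exact le_of_lt ((Fin.succAbove_lt_iff_castSucc_lt v (π ⟨i, hi⟩)).2 h)
    simp only [hcond]

variable (t : ℕ) (c : ℕ → ℕ)

def Cond {n : ℕ} (π : Equiv.Perm (Fin n)) : Prop :=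
  ∀ i, 1 ≤ i → i ≤ t → Cn i (i - 1) π = c i

def Sfin (n : ℕ) : Finset (Equiv.Perm (Fin n)) :=
  Finset.univ.filter (Cond t c)

lemma mem_Sfin {n : ℕ} (π : Equiv.Perm (Fin n)) : π ∈ Sfin t c n ↔ Cond t c π := by
  simp [Sfin]

lemma cond_ins {n : ℕ} (ht : t ≤ n) (π : Equiv.Perm (Fin n)) (v : Fin (n + 1)) :
    Cond t c (ins π v) ↔ Cond t c π := by
  unfold Cond
  refine forall_congr' fun i => ?_
  refine imp_congr_right fun h1 => imp_congr_right fun h2 => ?_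
  rw [Cn_ins_of_le i (i - 1) (by omega) (by omega)]

lemma sum_Sfin {n : ℕ} (ht : t ≤ n) {M : Type*} [AddCommMonoid M]
    (f : Equiv.Perm (Fin (n + 1)) → M) :
    ∑ ρ ∈ Sfin t c (n + 1), f ρ
      = ∑ p ∈ (Sfin t c n) ×ˢ (Finset.univ : Finset (Fin (n + 1))), f (ins p.1 p.2) := by
  refine (Finset.sum_bij (fun p _ => ins p.1 p.2) ?_ ?_ ?_ ?_).symm
  · rintro ⟨π, v⟩ hp
    rw [Finset.mem_product] at hp
    rw [mem_Sfin] at hp ⊢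
    exact (cond_ins t c ht π v).2 hp.1
  · rintro ⟨π, v⟩ _ ⟨π', v'⟩ _ h
    exact ins_bijective.1 h
  · intro ρ hρ
    obtain ⟨⟨π, v⟩, h⟩ := ins_bijective.2 ρ
    have h' : ins π v = ρ := h
    rw [mem_Sfin] at hρ
    have hπ : π ∈ Sfin t c n := by
      rw [mem_Sfin]
      refine (cond_ins t c ht π v).1 ?_
      rw [h']
      exact hρ
    exact ⟨⟨π, v⟩, Finset.mem_product.2 ⟨hπ, Finset.mem_univ _⟩, h⟩
  · intros; rfl

lemma card_Sfin {n : ℕ} (ht : t ≤ n) :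
    (Sfin t c (n + 1)).card = (n + 1) * (Sfin t c n).card := by
  have h := sum_Sfin t c ht (fun _ => (1 : ℕ))
  rw [← Finset.card_eq_sum_ones, ← Finset.card_eq_sum_ones, Finset.card_product] at h
  simpa [mul_comm] using h

lemma exists_perm (hc : ∀ i, 1 ≤ i → i ≤ t → 1 ≤ c i ∧ c i ≤ i) :
    ∀ n, n ≤ t → ∃ π : Equiv.Perm (Fin n), ∀ i, 1 ≤ i → i ≤ n → Cn i (i - 1) π = c i := by
  intro n
  induction n with
  | zero => exact fun _ => ⟨1, fun i h1 h2 => by omega⟩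
  | succ n ih =>
    intro hn
    obtain ⟨π, hπ⟩ := ih (by omega)
    have hcn := hc (n + 1) (by omega) hn
    refine ⟨ins π ⟨n + 1 - c (n + 1), by omega⟩, fun i h1 h2 => ?_⟩
    rcases Nat.lt_or_ge i (n + 1) with h | h
    · rw [Cn_ins_of_le i (i - 1) (by omega) (by omega), hπ i h1 (by omega)]
    · have hi : i = n + 1 := by omega
      subst hi
      rw [show n + 1 - 1 = n from rfl, Cn_ins_last]
      show n + 1 - (n + 1 - c (n + 1)) = c (n + 1)
      omega

lemma Sfin_card_pos (hc : ∀ i, 1 ≤ i → i ≤ t → 1 ≤ c i ∧ c i ≤ i) :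
    ∀ n, t ≤ n → 0 < (Sfin t c n).card := by
  refine Nat.le_induction ?_ ?_
  · obtain ⟨π, hπ⟩ := exists_perm t c hc t le_rfl
    refine Finset.card_pos.2 ⟨π, ?_⟩
    rw [mem_Sfin]
    exact fun i h1 h2 => hπ i h1 h2
  · intro n hn ih
    rw [card_Sfin t c hn]
    positivity

lemma gauss (n : ℕ) : 2 * ∑ v : Fin (n + 1), (n + 1 - (v : ℕ)) = (n + 1) * (n + 2) := by
  rw [Fin.sum_univ_eq_sum_range (fun j => n + 1 - j) (n + 1)]
  have h1 : ∑ j ∈ Finset.range (n + 1), (n + 1 - j)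
      = ∑ j ∈ Finset.range (n + 1), (j + 1) := by
    rw [← Finset.sum_range_reflect (fun j => j + 1) (n + 1)]
    refine Finset.sum_congr rfl fun j hj => ?_
    rw [Finset.mem_range] at hj
    omega
  rw [h1, Finset.sum_add_distrib, Finset.sum_const, Finset.card_range, smul_eq_mul, mul_one]
  have h2 : (∑ i ∈ Finset.range (n + 1), i) * 2 = (n + 1) * n := by
    simpa using Finset.sum_range_id_mul_two (n + 1)
  nlinarith [h2]

lemma sum_last {n : ℕ} (ht : t ≤ n) :
    2 * ∑ ρ ∈ Sfin t c (n + 1), Cn (n + 1) n ρ = (n + 2) * (Sfin t c (n + 1)).card := by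
  rw [sum_Sfin t c ht]
  have h : ∀ p ∈ (Sfin t c n) ×ˢ (Finset.univ : Finset (Fin (n + 1))),
      Cn (n + 1) n (ins p.1 p.2) = n + 1 - (p.2 : ℕ) := fun p _ => Cn_ins_last p.1 p.2
  rw [Finset.sum_congr rfl h, Finset.sum_product, card_Sfin t c ht]
  have hconst : ∀ x : Equiv.Perm (Fin n),
      (∑ y : Fin (n + 1), (n + 1 - (((x, y) : Equiv.Perm (Fin n) × Fin (n + 1)).2 : ℕ)))
        = ∑ v : Fin (n + 1), (n + 1 - (v : ℕ)) := fun x => rfl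
  rw [Finset.sum_congr rfl fun x _ => hconst x, Finset.sum_const, smul_eq_mul]
  have hg := gauss n
  calc 2 * ((Sfin t c n).card * ∑ v : Fin (n + 1), (n + 1 - (v : ℕ)))
      = (Sfin t c n).card * (2 * ∑ v : Fin (n + 1), (n + 1 - (v : ℕ))) := by ring
    _ = (Sfin t c n).card * ((n + 1) * (n + 2)) := by rw [hg]
    _ = (n + 2) * ((n + 1) * (Sfin t c n).card) := by ring

lemma sum_mid (ht1 : 1 ≤ t) :
    ∀ n, t ≤ n →
      (t + 1) * (∑ π ∈ Sfin t c n, Cn n (t - 1) π)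
        = (n + 1) * c t * (Sfin t c n).card := by
  refine Nat.le_induction ?_ ?_
  · have h : ∀ π ∈ Sfin t c t, Cn t (t - 1) π = c t := by
      intro π hπ
      rw [mem_Sfin] at hπ
      exact hπ t ht1 le_rfl
    rw [Finset.sum_congr rfl h, Finset.sum_const, smul_eq_mul]
    ring
  · intro n hn ih
    have ht1n : t - 1 < n := by omega
    rw [sum_Sfin t c hn]
    have key : ∀ p ∈ (Sfin t c n) ×ˢ (Finset.univ : Finset (Fin (n + 1))),
        Cn (n + 1) (t - 1) (ins p.1 p.2)
          = Cn n (t - 1) p.1 + (if Fin.castSucc (p.1 ⟨t - 1, ht1n⟩) < p.2 then 1 else 0) :=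
      fun p _ => Cn_ins_castSucc (t - 1) ht1n p.1 p.2
    rw [Finset.sum_congr rfl key, Finset.sum_product]
    have inner : ∀ π : Equiv.Perm (Fin n),
        ∑ v : Fin (n + 1),
            (Cn n (t - 1) π + (if Fin.castSucc (π ⟨t - 1, ht1n⟩) < v then 1 else 0))
          = (n + 2) * Cn n (t - 1) π := by
      intro π
      rw [Finset.sum_add_distrib, Finset.sum_const, Finset.card_univ, Fintype.card_fin,
        smul_eq_mul]
      have hcard : ∑ v : Fin (n + 1), (if Fin.castSucc (π ⟨t - 1, ht1n⟩) < v then 1 else 0)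
          = (Finset.univ.filter fun v : Fin (n + 1) =>
              Fin.castSucc (π ⟨t - 1, ht1n⟩) < v).card := by
        rw [Finset.card_filter]
      have hIoi : (Finset.univ.filter fun v : Fin (n + 1) =>
          Fin.castSucc (π ⟨t - 1, ht1n⟩) < v) = Finset.Ioi (Fin.castSucc (π ⟨t - 1, ht1n⟩)) := by
        ext v; simp
      have hfull := Cn_full (t - 1) ht1n π
      rw [hcard, hIoi, Fin.card_Ioi]
      have hval : ((Fin.castSucc (π ⟨t - 1, ht1n⟩)) : ℕ) = (π ⟨t - 1, ht1n⟩ : ℕ) := rfl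
      rw [hval]
      have hlt : (π ⟨t - 1, ht1n⟩ : ℕ) < n := (π ⟨t - 1, ht1n⟩).isLt
      rw [hfull]
      have : n + 1 - 1 - (π ⟨t - 1, ht1n⟩ : ℕ) = n - (π ⟨t - 1, ht1n⟩ : ℕ) := by omega
      rw [this]
      ring
    rw [Finset.sum_congr rfl (fun π _ => inner π), ← Finset.mul_sum, card_Sfin t c hn]
    nlinarith [ih]

open MeasureTheory ProbabilityTheory

/-! ### The product space -/

/-- counting function on the product space -/
def cnt {k : ℕ} (m i : ℕ) (x : Fin k → ℝ) : ℕ :=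
  (Finset.univ.filter fun j : Fin k => (j : ℕ) < m ∧ ∀ hi : i < k, x ⟨i, hi⟩ ≤ x j).card

lemma measurable_cnt {k : ℕ} (m i : ℕ) : Measurable (fun x : Fin k → ℝ => cnt m i x) := by
  unfold cnt
  simp_rw [Finset.card_filter]
  apply Finset.measurable_sum
  intro j _
  have hs : MeasurableSet {x : Fin k → ℝ | (j : ℕ) < m ∧ ∀ hi : i < k, x ⟨i, hi⟩ ≤ x j} := by
    by_cases hj : (j : ℕ) < m
    · by_cases hi : i < k
      · have hset : {x : Fin k → ℝ | (j : ℕ) < m ∧ ∀ hi' : i < k, x ⟨i, hi'⟩ ≤ x j}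
            = {x : Fin k → ℝ | x ⟨i, hi⟩ ≤ x j} := by
          ext x
          simp only [Set.mem_setOf_eq, hj, true_and]
          exact ⟨fun h => h hi, fun h _ => h⟩
        rw [hset]
        exact measurableSet_le (measurable_pi_apply _) (measurable_pi_apply _)
      · have hset : {x : Fin k → ℝ | (j : ℕ) < m ∧ ∀ hi' : i < k, x ⟨i, hi'⟩ ≤ x j}
            = Set.univ := by
          ext x
          simp only [Set.mem_setOf_eq, Set.mem_univ, iff_true, hj, true_and]
          exact fun hi' => absurd hi' hi
        rw [hset]; exact MeasurableSet.univ
    · have hset : {x : Fin k → ℝ | (j : ℕ) < m ∧ ∀ hi' : i < k, x ⟨i, hi'⟩ ≤ x j} = ∅ := by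
        ext x; simp [hj]
      rw [hset]; exact MeasurableSet.empty
  exact Measurable.ite hs measurable_const measurable_const

lemma cnt_le {k : ℕ} (m i : ℕ) (x : Fin k → ℝ) : cnt m i x ≤ k := by
  unfold cnt
  exact le_trans (Finset.card_filter_le _ _) (by simp)

/-- coordinate permutation map -/
def pmap {k : ℕ} (σ : Equiv.Perm (Fin k)) : (Fin k → ℝ) → (Fin k → ℝ) := fun x i => x (σ i)

lemma measurable_pmap {k : ℕ} (σ : Equiv.Perm (Fin k)) : Measurable (pmap σ) :=
  measurable_pi_lambda _ fun i => measurable_pi_apply _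

def Esort (k : ℕ) : Set (Fin k → ℝ) := {y | StrictMono y}

def Esig {k : ℕ} (σ : Equiv.Perm (Fin k)) : Set (Fin k → ℝ) := pmap σ ⁻¹' Esort k

lemma measurableSet_Esort (k : ℕ) : MeasurableSet (Esort k) := by
  have h : Esort k = ⋂ (p : Fin k × Fin k), ⋂ (_ : p.1 < p.2), {y : Fin k → ℝ | y p.1 < y p.2} := by
    ext y
    simp only [Esort, Set.mem_setOf_eq, Set.mem_iInter]
    exact ⟨fun hy p hp => hy hp, fun hy a b hab => hy (a, b) hab⟩
  rw [h]
  exact MeasurableSet.iInter fun p => MeasurableSet.iInter fun _ =>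
    measurableSet_lt (measurable_pi_apply _) (measurable_pi_apply _)

lemma measurableSet_Esig {k : ℕ} (σ : Equiv.Perm (Fin k)) : MeasurableSet (Esig σ) :=
  (measurableSet_Esort k).preimage (measurable_pmap σ)

lemma le_iff_of_mem {k : ℕ} {σ : Equiv.Perm (Fin k)} {x : Fin k → ℝ} (hx : x ∈ Esig σ)
    (i j : Fin k) : x i ≤ x j ↔ σ.symm i ≤ σ.symm j := by
  have hx' : StrictMono fun a => x (σ a) := hx
  conv_lhs => rw [← σ.apply_symm_apply i, ← σ.apply_symm_apply j]
  exact hx'.le_iff_le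

lemma inj_of_mem {k : ℕ} {σ : Equiv.Perm (Fin k)} {x : Fin k → ℝ} (hx : x ∈ Esig σ) :
    Function.Injective x := by
  have hx' : StrictMono fun a => x (σ a) := hx
  intro a b hab
  have ha : x (σ (σ.symm a)) = x (σ (σ.symm b)) := by
    rw [σ.apply_symm_apply, σ.apply_symm_apply]; exact hab
  have := hx'.injective ha
  have h2 : σ.symm a = σ.symm b := this
  simpa using congrArg σ h2

lemma cnt_eq_Cn {k : ℕ} {σ : Equiv.Perm (Fin k)} {x : Fin k → ℝ} (hx : x ∈ Esig σ)
    (m i : ℕ) : cnt m i x = Cn m i σ.symm := by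
  unfold cnt Cn
  congr 1
  refine Finset.filter_congr fun j _ => ?_
  refine and_congr_right fun _ => forall_congr' fun hi => ?_
  exact le_iff_of_mem hx _ _

lemma Esig_disjoint {k : ℕ} {σ τ : Equiv.Perm (Fin k)} (hst : σ ≠ τ) :
    Disjoint (Esig σ) (Esig τ) := by
  rw [Set.disjoint_left]
  intro x hxσ hxτ
  apply hst
  have h1 : StrictMono fun a => x (σ a) := hxσ
  have lt_iff : ∀ i j, x i < x j ↔ τ.symm i < τ.symm j := fun i j =>
    lt_iff_lt_of_le_iff_le (le_iff_of_mem hxτ j i)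
  have hg : StrictMono fun a => τ.symm (σ a) := fun a b hab => (lt_iff _ _).1 (h1 hab)
  have hrange : Set.range (fun a => τ.symm (σ a)) = Set.range (id : Fin k → Fin k) := by
    rw [Set.range_id]
    exact (σ.trans τ.symm).surjective.range_eq
  have hid := (hg.range_inj strictMono_id).1 hrange
  ext a
  have := congrFun hid a
  simp only [id_eq] at this
  have : σ a = τ (τ.symm (σ a)) := (τ.apply_symm_apply _).symm
  rw [this, congrFun hid a]
  simp

lemma inj_sub {k : ℕ} :
    {x : Fin k → ℝ | Function.Injective x} ⊆ ⋃ σ : Equiv.Perm (Fin k), Esig σ := by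
  intro x hx
  refine Set.mem_iUnion.2 ⟨Tuple.sort x, ?_⟩
  show StrictMono fun i => x (Tuple.sort x i)
  have hmono : Monotone (x ∘ Tuple.sort x) := Tuple.monotone_sort x
  have hinj : Function.Injective (x ∘ Tuple.sort x) := hx.comp (Equiv.injective _)
  exact hmono.strictMono_of_injective hinj

section Measure

variable {k : ℕ} (ν : Measure ℝ) [IsProbabilityMeasure ν]

lemma map_pair_eq_prod (a b : Fin k) (hab : a ≠ b) :
    (Measure.pi fun _ : Fin k => ν).map (fun x => (x a, x b)) = ν.prod ν := by
  refine (Measure.prod_eq fun s t hs ht => ?_).symm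
  rw [Measure.map_apply (by fun_prop) (hs.prod ht)]
  have hpre : (fun x : Fin k → ℝ => (x a, x b)) ⁻¹' (s ×ˢ t)
      = Set.pi Set.univ (fun j => if j = a then s else if j = b then t else Set.univ) := by
    ext x
    simp only [Set.mem_preimage, Set.mem_prod, Set.mem_pi, Set.mem_univ, true_implies]
    constructor
    · rintro ⟨h1, h2⟩ j
      by_cases hja : j = a
      · subst hja; simp [h1]
      · by_cases hjb : j = b
        · subst hjb; simp [hja, h2]
        · simp [hja, hjb]
    · intro h
      have h1 := h a
      have h2 := h b
      rw [if_pos rfl] at h1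
      rw [if_neg hab.symm, if_pos rfl] at h2
      exact ⟨h1, h2⟩
  rw [hpre, Measure.pi_pi]
  have : ∀ j : Fin k, ν (if j = a then s else if j = b then t else Set.univ)
      = (if j = a then ν s else if j = b then ν t else 1) := by
    intro j
    split_ifs <;> simp
  rw [Finset.prod_congr rfl fun j _ => this j]
  rw [Finset.prod_eq_mul_prod_sdiff_singleton_of_mem (Finset.mem_univ a)]
  rw [if_pos rfl]
  have hb : b ∈ Finset.univ \ {a} := by simp [hab.symm]  -- b ≠ a
  rw [Finset.prod_eq_single_of_mem b hb]
  · rw [if_neg hab.symm, if_pos rfl]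
  · intro j hj hjb
    rw [Finset.mem_sdiff, Finset.mem_singleton] at hj
    rw [if_neg hj.2, if_neg hjb]

lemma prod_diag_null (hν : ∀ x : ℝ, ν {x} = 0) :
    (ν.prod ν) {p : ℝ × ℝ | p.1 = p.2} = 0 := by
  have hmeas : MeasurableSet {p : ℝ × ℝ | p.1 = p.2} :=
    measurableSet_eq_fun measurable_fst measurable_snd
  rw [Measure.prod_apply hmeas]
  have h : ∀ x : ℝ, ν (Prod.mk x ⁻¹' {p : ℝ × ℝ | p.1 = p.2}) = 0 := by
    intro x
    have : Prod.mk x ⁻¹' {p : ℝ × ℝ | p.1 = p.2} = {x} := by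
      ext y; simp [eq_comm]
    rw [this]; exact hν x
  simp [hν]

lemma pair_null (hν : ∀ x : ℝ, ν {x} = 0) (a b : Fin k) (hab : a ≠ b) :
    (Measure.pi fun _ : Fin k => ν) {x | x a = x b} = 0 := by
  have hd : MeasurableSet {p : ℝ × ℝ | p.1 = p.2} :=
    measurableSet_eq_fun measurable_fst measurable_snd
  have : {x : Fin k → ℝ | x a = x b} = (fun x : Fin k → ℝ => (x a, x b)) ⁻¹' {p | p.1 = p.2} :=
    rfl
  rw [this, ← Measure.map_apply (by fun_prop) hd, map_pair_eq_prod ν a b hab,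
    prod_diag_null ν hν]

lemma ninj_null (hν : ∀ x : ℝ, ν {x} = 0) :
    (Measure.pi fun _ : Fin k => ν) {x : Fin k → ℝ | ¬ Function.Injective x} = 0 := by
  have hsub : {x : Fin k → ℝ | ¬ Function.Injective x}
      ⊆ ⋃ (p : Fin k × Fin k) (_ : p.1 ≠ p.2), {x : Fin k → ℝ | x p.1 = x p.2} := by
    intro x hx
    simp only [Set.mem_setOf_eq, Function.Injective, not_forall] at hx
    obtain ⟨a, b, hab, hne⟩ := hx
    exact Set.mem_iUnion.2 ⟨(a, b), Set.mem_iUnion.2 ⟨hne, hab⟩⟩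
  refine measure_mono_null hsub ?_
  exact measure_iUnion_null fun p => measure_iUnion_null fun hp => pair_null ν hν p.1 p.2 hp

lemma map_pmap (σ : Equiv.Perm (Fin k)) :
    (Measure.pi fun _ : Fin k => ν).map (pmap σ) = Measure.pi fun _ : Fin k => ν := by
  refine (Measure.pi_eq fun s hs => ?_).symm
  rw [Measure.map_apply (measurable_pmap σ) (MeasurableSet.univ_pi hs)]
  have hpre : pmap σ ⁻¹' Set.pi Set.univ s = Set.pi Set.univ (fun j => s (σ.symm j)) := by
    ext x
    simp only [Set.mem_preimage, Set.mem_pi, Set.mem_univ, true_implies, pmap]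
    constructor
    · intro h j
      have := h (σ.symm j)
      rwa [σ.apply_symm_apply] at this
    · intro h i
      have := h (σ i)
      rwa [σ.symm_apply_apply] at this
  rw [hpre, Measure.pi_pi]
  exact Equiv.prod_comp σ.symm fun i => ν (s i)

lemma meas_Esig (σ : Equiv.Perm (Fin k)) :
    (Measure.pi fun _ : Fin k => ν) (Esig σ) = (Measure.pi fun _ : Fin k => ν) (Esort k) := by
  have h : (Measure.pi fun _ : Fin k => ν) (Esig σ)
      = ((Measure.pi fun _ : Fin k => ν).map (pmap σ)) (Esort k) := by
    rw [Measure.map_apply (measurable_pmap σ) (measurableSet_Esort k)]; rfl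
  rw [h, map_pmap]

lemma meas_Esort (hν : ∀ x : ℝ, ν {x} = 0) :
    (Measure.pi fun _ : Fin k => ν) (Esort k) = ((Nat.factorial k : ℝ≥0∞))⁻¹ := by
  set P := Measure.pi fun _ : Fin k => ν with hP
  have hdisj : Pairwise (Function.onFun Disjoint fun σ : Equiv.Perm (Fin k) => Esig σ) :=
    fun σ τ hst => Esig_disjoint hst
  have hU : P (⋃ σ : Equiv.Perm (Fin k), Esig σ) = ∑' σ, P (Esig σ) :=
    measure_iUnion hdisj fun σ => measurableSet_Esig σ
  have hfull : P (⋃ σ : Equiv.Perm (Fin k), Esig σ) = 1 := by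
    refine le_antisymm prob_le_one ?_
    have h1 : (1 : ℝ≥0∞) = P Set.univ := measure_univ.symm
    have hsub : Set.univ ⊆ (⋃ σ : Equiv.Perm (Fin k), Esig σ)
        ∪ {x : Fin k → ℝ | ¬ Function.Injective x} := by
      intro x _
      by_cases hx : Function.Injective x
      · exact Set.mem_union_left _ (inj_sub hx)
      · exact Set.mem_union_right _ hx
    calc (1 : ℝ≥0∞) = P Set.univ := h1
      _ ≤ P ((⋃ σ : Equiv.Perm (Fin k), Esig σ) ∪ {x : Fin k → ℝ | ¬ Function.Injective x}) :=
          measure_mono hsub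
      _ ≤ P (⋃ σ : Equiv.Perm (Fin k), Esig σ) + P {x : Fin k → ℝ | ¬ Function.Injective x} :=
          measure_union_le _ _
      _ = P (⋃ σ : Equiv.Perm (Fin k), Esig σ) := by rw [ninj_null ν hν, add_zero]
  have hsum : (Nat.factorial k : ℝ≥0∞) * P (Esort k) = 1 := by
    rw [← hfull, hU, tsum_fintype]
    rw [Finset.sum_congr rfl fun σ _ => meas_Esig ν σ, Finset.sum_const, Finset.card_univ,
      Fintype.card_perm, Fintype.card_fin, nsmul_eq_mul]
  have hfne : (Nat.factorial k : ℝ≥0∞) ≠ 0 := Nat.cast_ne_zero.2 (Nat.factorial_ne_zero k)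
  have hfnt : (Nat.factorial k : ℝ≥0∞) ≠ ⊤ := ENNReal.natCast_ne_top _
  calc P (Esort k) = 1 * P (Esort k) := (one_mul _).symm
    _ = ((Nat.factorial k : ℝ≥0∞)⁻¹ * (Nat.factorial k : ℝ≥0∞)) * P (Esort k) := by
        rw [ENNReal.inv_mul_cancel hfne hfnt]
    _ = (Nat.factorial k : ℝ≥0∞)⁻¹ * ((Nat.factorial k : ℝ≥0∞) * P (Esort k)) := by ring
    _ = (Nat.factorial k : ℝ≥0∞)⁻¹ := by rw [hsum, mul_one]

end Measure



open MeasureTheory ProbabilityTheory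

lemma map_Y_eq_pi {Ω : Type*} [MeasurableSpace Ω] (μ : Measure Ω) [IsProbabilityMeasure μ]
    {k : ℕ} (X : ℕ → Ω → ℝ) (hmeas : ∀ i ∈ Set.Ici 1, Measurable (X i))
    (hindep : IndepSeq X (Set.Ici 1) μ)
    (hident : ∀ i ∈ Set.Ici 1, ∀ j ∈ Set.Ici 1, IdentDistrib (X i) (X j) μ μ) :
    μ.map (fun ω (i : Fin k) => X ((i : ℕ) + 1) ω)
      = Measure.pi (fun _ : Fin k => μ.map (X 1)) := by
  have hm1 : Measurable (X 1) := hmeas 1 (by simp)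
  have hmi : ∀ i : Fin k, Measurable (X ((i : ℕ) + 1)) := fun i => hmeas _ (by simp)
  have hY : Measurable (fun ω (i : Fin k) => X ((i : ℕ) + 1) ω) :=
    measurable_pi_lambda _ fun i => hmi i
  refine (Measure.pi_eq fun s hs => ?_).symm
  rw [Measure.map_apply hY (MeasurableSet.univ_pi hs)]
  have hpre : (fun ω (i : Fin k) => X ((i : ℕ) + 1) ω) ⁻¹' Set.pi Set.univ s
      = ⋂ i : Fin k, X ((i : ℕ) + 1) ⁻¹' s i := by
    ext ω
    simp [Set.mem_pi]
  rw [hpre]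
  have hindep' : iIndepFun (m := fun _ : ↥(Set.Ici 1 : Set ℕ) => (inferInstance : MeasurableSpace ℝ))
      (fun i : ↥(Set.Ici 1 : Set ℕ) => X i.1) μ := hindep
  set e : Fin k → ↥(Set.Ici 1 : Set ℕ) := fun i => ⟨(i : ℕ) + 1, by simp⟩ with he
  have he_inj : Function.Injective e := by
    intro a b hab
    have h : (a : ℕ) + 1 = (b : ℕ) + 1 := congrArg Subtype.val hab
    exact Fin.ext (by omega)
  set S : Finset ↥(Set.Ici 1 : Set ℕ) := Finset.image e Finset.univ with hS
  set sets : ∀ _ : ↥(Set.Ici 1 : Set ℕ), Set ℝ := fun j =>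
    if h : (j : ℕ) - 1 < k ∧ 1 ≤ (j : ℕ) then s ⟨(j : ℕ) - 1, h.1⟩ else Set.univ with hsets
  have hsets_e : ∀ i : Fin k, sets (e i) = s i := by
    intro i
    have h : ((e i : ℕ)) - 1 < k ∧ 1 ≤ ((e i : ℕ)) := by
      refine ⟨?_, ?_⟩
      · show (i : ℕ) + 1 - 1 < k
        simpa using i.isLt
      · show 1 ≤ (i : ℕ) + 1
        omega
    rw [hsets]
    simp only
    rw [dif_pos h]
    exact congrArg s (Fin.ext (by simp [he]))
  have hmeas_sets : ∀ j, j ∈ S → MeasurableSet (sets j) := by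
    intro j _
    rw [hsets]
    simp only
    split_ifs with h
    · exact hs _
    · exact MeasurableSet.univ
  have hind := hindep'.measure_inter_preimage_eq_mul S hmeas_sets
  have hinter : (⋂ j ∈ S, X (j : ℕ) ⁻¹' sets j) = ⋂ i : Fin k, X ((i : ℕ) + 1) ⁻¹' s i := by
    ext ω
    simp only [Set.mem_iInter, hS, Finset.mem_image, Finset.mem_univ, true_and,
      forall_exists_index]
    constructor
    · intro h i
      have := h (e i) i rfl
      rwa [hsets_e i] at this
    · rintro h j i rfl
      rw [hsets_e i]
      exact h i
  rw [hinter] at hind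
  rw [hind, hS, Finset.prod_image (fun a _ b _ hab => he_inj hab)]
  refine Finset.prod_congr rfl fun i _ => ?_
  rw [hsets_e i]
  have hid : μ.map (X ((i : ℕ) + 1)) = μ.map (X 1) :=
    (hident ((i : ℕ) + 1) (by simp) 1 (by simp)).map_eq
  rw [← Measure.map_apply (hmi i) (hs i), hid]

lemma absRank_eq_cnt {Ω : Type*} (X : ℕ → Ω → ℝ) {k s m : ℕ}
    (hs1 : 1 ≤ s) (hsk : s ≤ k) (hmk : m ≤ k) (ω : Ω) :
    absRank X s m ω = cnt m (s - 1) (fun i : Fin k => X ((i : ℕ) + 1) ω) := by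
  unfold absRank cnt
  refine Finset.card_bij (fun a ha => (⟨a - 1, by
    rw [Finset.mem_filter, Finset.mem_Icc] at ha
    omega⟩ : Fin k)) ?_ ?_ ?_
  · intro a ha
    rw [Finset.mem_filter, Finset.mem_Icc] at ha
    rw [Finset.mem_filter]
    refine ⟨Finset.mem_univ _, ?_, ?_⟩
    · show a - 1 < m
      omega
    · intro hi
      show X ((s - 1) + 1) ω ≤ X ((a - 1) + 1) ω
      rw [show s - 1 + 1 = s by omega, show a - 1 + 1 = a by omega]
      exact ha.2
  · intro a ha b hb hab
    rw [Finset.mem_filter, Finset.mem_Icc] at ha hb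
    have := congrArg Fin.val hab
    simp only at this
    omega
  · intro b hb
    rw [Finset.mem_filter] at hb
    obtain ⟨-, hb1, hb2⟩ := hb
    refine ⟨(b : ℕ) + 1, ?_, ?_⟩
    · rw [Finset.mem_filter, Finset.mem_Icc]
      refine ⟨⟨by omega, by omega⟩, ?_⟩
      have := hb2 (by omega)
      have hx : X ((s - 1) + 1) ω ≤ X ((b : ℕ) + 1) ω := this
      rwa [show s - 1 + 1 = s by omega] at hx
    · exact Fin.ext (by simp)

end S16

end Aux

/-- `E[R_k − A_{t,k} | R_1 = r_1,…,R_{t−1} = r_{t−1}, R_t = r]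
  = (k+1)/2 − (k+1) r/(t+1)` for `1 ≤ t < k`. -/
theorem stmt_16 {Ω : Type*} [MeasurableSpace Ω] (μ : Measure Ω) [IsProbabilityMeasure μ]
    (X : ℕ → Ω → ℝ) (hX : IIDContinuousOn X (Set.Ici 1) μ)
    (t k : ℕ) (ht1 : 1 ≤ t) (htk : t < k)
    (r : ℕ) (hr : r ∈ Set.Icc 1 t)
    (rs : ℕ → ℕ) (hrs : ∀ i ∈ Set.Icc 1 (t - 1), rs i ∈ Set.Icc 1 i) :
    ∫ ω, ((relRank X k ω : ℝ) - (absRank X t k ω : ℝ))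
        ∂(μ[|{ω | (∀ i ∈ Set.Icc 1 (t - 1), relRank X i ω = rs i) ∧ relRank X t ω = r}])
      = ((k : ℝ) + 1) / 2 - ((k : ℝ) + 1) * (r : ℝ) / ((t : ℝ) + 1) := by
  classical
  obtain ⟨hmeas, hindep, hident, hatom⟩ := hX
  rw [Set.mem_Icc] at hr
  obtain ⟨n, rfl⟩ : ∃ n, k = n + 1 := ⟨k - 1, by omega⟩
  have htn : t ≤ n := by omega
  set ν : Measure ℝ := μ.map (X 1) with hν
  have hm1 : Measurable (X 1) := hmeas 1 (by simp)
  haveI : IsProbabilityMeasure ν := Measure.isProbabilityMeasure_map hm1.aemeasurable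
  have hν0 : ∀ x : ℝ, ν {x} = 0 := by
    intro x
    rw [hν, Measure.map_apply hm1 (measurableSet_singleton x)]
    exact hatom 1 (by simp) x
  set P : Measure (Fin (n + 1) → ℝ) := Measure.pi (fun _ => ν) with hP
  set Y : Ω → (Fin (n + 1) → ℝ) := fun ω i => X ((i : ℕ) + 1) ω with hYdef
  have hYmeas : Measurable Y := measurable_pi_lambda _ fun i => hmeas _ (by simp)
  have hlaw : μ.map Y = P := S16.map_Y_eq_pi μ X hmeas hindep hident
  set c : ℕ → ℕ := fun i => if i = t then r else rs i with hc
  have hcOK : ∀ i, 1 ≤ i → i ≤ t → 1 ≤ c i ∧ c i ≤ i := by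
    intro i h1 h2
    by_cases hit : i = t
    · subst hit
      rw [hc]
      simp only [if_pos rfl]
      exact hr
    · have hmem := hrs i (Set.mem_Icc.2 ⟨h1, by omega⟩)
      rw [Set.mem_Icc] at hmem
      rw [hc]
      simp only [if_neg hit]
      exact hmem
  set Aset : Set (Fin (n + 1) → ℝ) :=
    {x | (∀ i, 1 ≤ i → i ≤ t - 1 → S16.cnt i (i - 1) x = rs i) ∧ S16.cnt t (t - 1) x = r}
    with hA
  have hAmeas : MeasurableSet Aset := by
    have heq : Aset
        = (⋂ (i : ℕ), ⋂ (_ : 1 ≤ i), ⋂ (_ : i ≤ t - 1),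
            (fun x : Fin (n + 1) → ℝ => S16.cnt i (i - 1) x) ⁻¹' {rs i})
          ∩ ((fun x : Fin (n + 1) → ℝ => S16.cnt t (t - 1) x) ⁻¹' {r}) := by
      rw [hA]
      ext x
      simp [Set.mem_iInter]
    rw [heq]
    refine MeasurableSet.inter ?_ ((S16.measurable_cnt t (t - 1)) (measurableSet_singleton r))
    exact MeasurableSet.iInter fun i => MeasurableSet.iInter fun _ =>
      MeasurableSet.iInter fun _ =>
        (S16.measurable_cnt i (i - 1)) (measurableSet_singleton (rs i))
  have hrank : ∀ (s m : ℕ) (ω : Ω), 1 ≤ s → s ≤ n + 1 → m ≤ n + 1 →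
      absRank X s m ω = S16.cnt m (s - 1) (Y ω) :=
    fun s m ω h1 h2 h3 => S16.absRank_eq_cnt X h1 h2 h3 ω
  have hevent : {ω | (∀ i ∈ Set.Icc 1 (t - 1), relRank X i ω = rs i) ∧ relRank X t ω = r}
      = Y ⁻¹' Aset := by
    ext ω
    simp only [Set.mem_setOf_eq, Set.mem_preimage, hA, Set.mem_Icc]
    constructor
    · rintro ⟨h1, h2⟩
      refine ⟨fun i hi1 hi2 => ?_, ?_⟩
      · rw [← hrank i i ω hi1 (by omega) (by omega)]
        exact h1 i ⟨hi1, hi2⟩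
      · rw [← hrank t t ω ht1 (by omega) (by omega)]
        exact h2
    · rintro ⟨h1, h2⟩
      refine ⟨fun i hi => ?_, ?_⟩
      · rw [relRank, hrank i i ω hi.1 (by omega) (by omega)]
        exact h1 i hi.1 hi.2
      · rw [relRank, hrank t t ω ht1 (by omega) (by omega)]
        exact h2
  rw [hevent]
  have hPA : μ (Y ⁻¹' Aset) = P Aset := by
    rw [← Measure.map_apply hYmeas hAmeas, hlaw]
  set g : (Fin (n + 1) → ℝ) → ℝ :=
    fun x => (S16.cnt (n + 1) n x : ℝ) - (S16.cnt (n + 1) (t - 1) x : ℝ) with hg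
  have hgmeas : Measurable g := by
    apply Measurable.sub <;> exact measurable_from_top.comp (S16.measurable_cnt _ _)
  have hgbound : ∀ x, ‖g x‖ ≤ 2 * ((n : ℝ) + 1) := by
    intro x
    rw [hg]
    simp only [Real.norm_eq_abs]
    have h1 : (S16.cnt (n + 1) n x : ℝ) ≤ (n : ℝ) + 1 := by
      exact_mod_cast S16.cnt_le (n + 1) n x
    have h2 : (S16.cnt (n + 1) (t - 1) x : ℝ) ≤ (n : ℝ) + 1 := by
      exact_mod_cast S16.cnt_le (n + 1) (t - 1) x
    have h3 : (0 : ℝ) ≤ (S16.cnt (n + 1) n x : ℝ) := Nat.cast_nonneg _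
    have h4 : (0 : ℝ) ≤ (S16.cnt (n + 1) (t - 1) x : ℝ) := Nat.cast_nonneg _
    rw [abs_le]
    constructor <;> linarith
  have hgint : Integrable g P := by
    refine Integrable.mono' (integrable_const (2 * ((n : ℝ) + 1))) hgmeas.aestronglyMeasurable ?_
    exact Filter.Eventually.of_forall hgbound
  have hintegrand : ∀ ω, ((relRank X (n + 1) ω : ℝ) - (absRank X t (n + 1) ω : ℝ)) = g (Y ω) := by
    intro ω
    have e1 : relRank X (n + 1) ω = S16.cnt (n + 1) n (Y ω) := by
      have h := hrank (n + 1) (n + 1) ω (by omega) le_rfl le_rfl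
      rw [show n + 1 - 1 = n from rfl] at h
      exact h
    have e2 : absRank X t (n + 1) ω = S16.cnt (n + 1) (t - 1) (Y ω) :=
      hrank t (n + 1) ω ht1 (by omega) le_rfl
    rw [hg, e1, e2]
  have hcondmap : (μ[|Y ⁻¹' Aset]).map Y = P[|Aset] := by
    show ((μ (Y ⁻¹' Aset))⁻¹ • μ.restrict (Y ⁻¹' Aset)).map Y = (P Aset)⁻¹ • P.restrict Aset
    rw [Measure.map_smul, ← Measure.restrict_map hYmeas hAmeas, hlaw, hPA]
  -- the finite combinatorial data
  set SS : Finset (Equiv.Perm (Fin (n + 1))) := (S16.Sfin t c (n + 1)).image (fun π => π.symm)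
    with hSS
  have hsymm_inj : Function.Injective (fun π : Equiv.Perm (Fin (n + 1)) => π.symm) := by
    intro a b h
    simpa using congrArg Equiv.symm h
  have hmemSS : ∀ σ : Equiv.Perm (Fin (n + 1)), σ ∈ SS ↔ S16.Cond t c σ.symm := by
    intro σ
    rw [hSS]
    simp only [Finset.mem_image]
    constructor
    · rintro ⟨π, hπ, rfl⟩
      rw [S16.mem_Sfin] at hπ
      simpa using hπ
    · intro h
      exact ⟨σ.symm, by rw [S16.mem_Sfin]; exact h, Equiv.symm_symm σ⟩
  have hkey : ∀ (σ : Equiv.Perm (Fin (n + 1))) (x : Fin (n + 1) → ℝ),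
      x ∈ S16.Esig σ → (x ∈ Aset ↔ σ ∈ SS) := by
    intro σ x hx
    rw [hA, hmemSS]
    simp only [Set.mem_setOf_eq]
    constructor
    · rintro ⟨h1, h2⟩ i hi1 hi2
      rw [← S16.cnt_eq_Cn hx]
      by_cases hit : i = t
      · subst hit
        rw [h2, hc]
        simp
      · rw [h1 i hi1 (by omega), hc]
        simp [hit]
    · intro h
      constructor
      · intro i h1 h2
        have hi := h i h1 (by omega)
        rw [S16.cnt_eq_Cn hx, hi, hc]
        simp only [if_neg (show i ≠ t by omega)]
      · have hi := h t ht1 le_rfl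
        rw [S16.cnt_eq_Cn hx, hi, hc]
        simp
  set U : Set (Fin (n + 1) → ℝ) := ⋃ σ ∈ SS, S16.Esig σ with hU
  have hUsub : U ⊆ Aset := by
    rw [hU]
    intro x hx
    obtain ⟨σ, hσ, hxσ⟩ := Set.mem_iUnion₂.1 hx
    exact (hkey σ x hxσ).2 hσ
  have hAdiff : Aset \ U ⊆ {x : Fin (n + 1) → ℝ | ¬ Function.Injective x} := by
    rintro x ⟨hxA, hxU⟩
    show ¬ Function.Injective x
    intro hinj
    obtain ⟨σ, hσ⟩ := Set.mem_iUnion.1 (S16.inj_sub hinj)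
    exact hxU (Set.mem_iUnion₂.2 ⟨σ, (hkey σ x hσ).1 hxA, hσ⟩)
  have hae : Aset =ᵐ[P] U := by
    rw [MeasureTheory.ae_eq_set]
    refine ⟨measure_mono_null hAdiff (S16.ninj_null ν hν0), ?_⟩
    rw [Set.diff_eq_empty.2 hUsub]
    exact measure_empty
  have hPU : P Aset = (SS.card : ℝ≥0∞) * (Nat.factorial (n + 1) : ℝ≥0∞)⁻¹ := by
    rw [measure_congr hae, hU,
      measure_biUnion_finset (fun σ _ τ _ hst => S16.Esig_disjoint hst)
        (fun σ _ => S16.measurableSet_Esig σ),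
      Finset.sum_congr rfl fun σ _ => by
        rw [S16.meas_Esig ν σ, S16.meas_Esort ν hν0],
      Finset.sum_const, nsmul_eq_mul]
  have hint : ∫ x in Aset, g x ∂P
      = (∑ σ ∈ SS, ((S16.Cn (n + 1) n σ.symm : ℝ) - (S16.Cn (n + 1) (t - 1) σ.symm : ℝ)))
          * ((Nat.factorial (n + 1) : ℝ≥0∞)⁻¹).toReal := by
    have heach : ∀ σ ∈ SS, ∫ x in S16.Esig σ, g x ∂P
        = ((S16.Cn (n + 1) n σ.symm : ℝ) - (S16.Cn (n + 1) (t - 1) σ.symm : ℝ))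
            * ((Nat.factorial (n + 1) : ℝ≥0∞)⁻¹).toReal := by
      intro σ _
      have hgeq : Set.EqOn g
          (fun _ => ((S16.Cn (n + 1) n σ.symm : ℝ) - (S16.Cn (n + 1) (t - 1) σ.symm : ℝ)))
          (S16.Esig σ) := by
        intro x hx
        rw [hg]
        simp only
        rw [S16.cnt_eq_Cn hx, S16.cnt_eq_Cn hx]
      rw [setIntegral_congr_fun (S16.measurableSet_Esig σ) hgeq, setIntegral_const, measureReal_def,
        S16.meas_Esig ν σ, S16.meas_Esort ν hν0, smul_eq_mul, mul_comm]
    rw [setIntegral_congr_set hae, hU,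
      integral_biUnion_finset SS (fun σ _ => S16.measurableSet_Esig σ)
        (fun σ _ τ _ hst => S16.Esig_disjoint hst) (fun σ _ => hgint.integrableOn),
      Finset.sum_congr rfl heach, ← Finset.sum_mul]
  set N := (S16.Sfin t c (n + 1)).card with hNdef
  have hNpos : 0 < N := S16.Sfin_card_pos t c hcOK (n + 1) (by omega)
  have hSScard : SS.card = N := by
    rw [hSS, hNdef]
    exact Finset.card_image_of_injective _ hsymm_inj
  set S1 := ∑ π ∈ S16.Sfin t c (n + 1), S16.Cn (n + 1) n π with hS1
  set S2 := ∑ π ∈ S16.Sfin t c (n + 1), S16.Cn (n + 1) (t - 1) π with hS2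
  have hreindex : (∑ σ ∈ SS, ((S16.Cn (n + 1) n σ.symm : ℝ)
        - (S16.Cn (n + 1) (t - 1) σ.symm : ℝ)))
      = ((S1 : ℕ) : ℝ) - ((S2 : ℕ) : ℝ) := by
    rw [hS1, hS2, hSS, Finset.sum_image (fun a _ b _ h => hsymm_inj h)]
    push_cast
    rw [Finset.sum_sub_distrib]
    congr 1 <;> exact (Finset.sum_congr rfl fun π _ => by rw [Equiv.symm_symm])
  have hfact1 : 2 * S1 = (n + 2) * N := S16.sum_last t c htn
  have hfact2 : (t + 1) * S2 = (n + 1 + 1) * r * N := by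
    have h := S16.sum_mid t c ht1 (n + 1) (by omega)
    rw [show c t = r by rw [hc]; simp] at h
    rw [hS2, hNdef]
    exact h
  have hNR : (0 : ℝ) < (N : ℝ) := by exact_mod_cast hNpos
  have htR : (0 : ℝ) < (t : ℝ) + 1 := by positivity
  have hfk : (0 : ℝ) < (Nat.factorial (n + 1) : ℝ) := by
    exact_mod_cast Nat.factorial_pos (n + 1)
  have h1 : 2 * (S1 : ℝ) = ((n : ℝ) + 2) * (N : ℝ) := by exact_mod_cast hfact1
  have h2 : ((t : ℝ) + 1) * (S2 : ℝ) = ((n : ℝ) + 1 + 1) * (r : ℝ) * (N : ℝ) := by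
    exact_mod_cast hfact2
  have e1 : (S1 : ℝ) = ((n : ℝ) + 2) * (N : ℝ) / 2 := by linarith
  have e2 : (S2 : ℝ) = ((n : ℝ) + 1 + 1) * (r : ℝ) * (N : ℝ) / ((t : ℝ) + 1) := by
    rw [eq_div_iff (ne_of_gt htR)]
    linarith
  have htoR : ((Nat.factorial (n + 1) : ℝ≥0∞)⁻¹).toReal = ((Nat.factorial (n + 1) : ℝ))⁻¹ := by
    rw [ENNReal.toReal_inv, ENNReal.toReal_natCast]
  have hPAinv : ((P Aset)⁻¹).toReal = (((N : ℝ) * ((Nat.factorial (n + 1) : ℝ))⁻¹)⁻¹) := by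
    rw [hPU, hSScard, ENNReal.toReal_inv, ENNReal.toReal_mul, ENNReal.toReal_natCast,
      ENNReal.toReal_inv, ENNReal.toReal_natCast]
  calc ∫ ω, ((relRank X (n + 1) ω : ℝ) - (absRank X t (n + 1) ω : ℝ)) ∂(μ[|Y ⁻¹' Aset])
      = ∫ ω, g (Y ω) ∂(μ[|Y ⁻¹' Aset]) :=
        integral_congr_ae (Filter.Eventually.of_forall fun ω => hintegrand ω)
    _ = ∫ x, g x ∂(P[|Aset]) := by
        rw [← hcondmap, integral_map hYmeas.aemeasurable hgmeas.aestronglyMeasurable]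
    _ = ((P Aset)⁻¹).toReal * ∫ x in Aset, g x ∂P := by
        show ∫ x, g x ∂((P Aset)⁻¹ • P.restrict Aset) = _
        rw [integral_smul_measure, smul_eq_mul]
    _ = ((n : ℝ) + 1 + 1) / 2 - ((n : ℝ) + 1 + 1) * (r : ℝ) / ((t : ℝ) + 1) := by
        rw [hint, hreindex, hPAinv, htoR, e1, e2]
        field_simp
        ring
    _ = (((n : ℕ) + 1 : ℕ) : ℝ) / 2 + 1 / 2
        - ((((n : ℕ) + 1 : ℕ) : ℝ) + 1) * (r : ℝ) / ((t : ℝ) + 1) := by push_cast; ring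
    _ = ((((n : ℕ) + 1 : ℕ) : ℝ) + 1) / 2
        - ((((n : ℕ) + 1 : ℕ) : ℝ) + 1) * (r : ℝ) / ((t : ℝ) + 1) := by push_cast; ring
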